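/- In the fixed-design linear-predictor setting of Theorem 2, suppose the data are i.i.d. in the sense that Σ = σ_ε² I_n for some σ_ε² ≥ 0 and Cov((y_tr)_j, y_te) = 0 for all j. Then, since H has zero diagonal, tr(H Σ) = σ_ε² tr(H) = 0, so the CV bias vanishes: w_cv = 0. In contrast, for any deterministic n×n matrix H and independent identically distributed square-integrable random vectors y, y* : Ω → ℝ^n with Cov(y_i, y_j) = σ_ε² δ_{ij}, the expected optimism w = E[(1/n)‖y* − H y‖²] − E[(1/n)‖y − H y‖²] equals (2 σ_ε²/n) tr(H), which is in general nonzero. (Paper's comparison of CV bias and expected optimism in the i.i.d. case.) -/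

import Mathlib

open MeasureTheory ProbabilityTheory

/-- Variance `E[(U - E U)^2]` of a real random variable. -/
noncomputable def eVar {Ω : Type*} [MeasurableSpace Ω] (μ : Measure Ω) (U : Ω → ℝ) : ℝ :=
  ∫ ω, (U ω - ∫ ω', U ω' ∂μ) ^ 2 ∂μ

/-- Covariance `E[(U - E U)(V - E V)]` of two real random variables. -/
noncomputable def eCov {Ω : Type*} [MeasurableSpace Ω] (μ : Measure Ω) (U V : Ω → ℝ) : ℝ :=
  ∫ ω, (U ω - ∫ ω', U ω' ∂μ) * (V ω - ∫ ω', V ω' ∂μ) ∂μ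

section CVHelpers
variable {Ω : Type*} [MeasurableSpace Ω] {μ : Measure Ω} [IsProbabilityMeasure μ]

lemma mem2_integrable_mul {U V : Ω → ℝ} (hU : MemLp U 2 μ) (hV : MemLp V 2 μ) :
    Integrable (fun ω => U ω * V ω) μ := by
  have h1 := (hU.add hV).integrable_sq
  have h2 := hU.integrable_sq
  have h3 := hV.integrable_sq
  have he : (fun ω => U ω * V ω) = fun ω => (((U ω + V ω)^2 - U ω^2) - V ω^2) / 2 := by
    funext ω; ring
  rw [he]
  exact ((h1.sub h2).sub h3).div_const 2

lemma eCov_eq {U V : Ω → ℝ} (hU : MemLp U 2 μ) (hV : MemLp V 2 μ) :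
    eCov μ U V = (∫ ω, U ω * V ω ∂μ) - (∫ ω, U ω ∂μ) * (∫ ω, V ω ∂μ) := by
  have hUi := hU.integrable one_le_two
  have hVi := hV.integrable one_le_two
  have hUV := mem2_integrable_mul hU hV
  set a := ∫ ω, U ω ∂μ with ha
  set b := ∫ ω, V ω ∂μ with hb
  have he : ∀ ω, (U ω - a) * (V ω - b) = U ω * V ω - a * V ω - b * U ω + a * b := by
    intro ω; ring
  unfold eCov
  rw [show (∫ ω, (U ω - ∫ ω', U ω' ∂μ) * (V ω - ∫ ω', V ω' ∂μ) ∂μ)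
      = ∫ ω, (U ω * V ω - a * V ω - b * U ω + a * b) ∂μ by
    exact integral_congr_ae (Filter.Eventually.of_forall fun ω => he ω)]
  have i1 : Integrable (fun ω => U ω * V ω - a * V ω) μ := hUV.sub (hVi.const_mul a)
  have i2 : Integrable (fun ω => U ω * V ω - a * V ω - b * U ω) μ := i1.sub (hUi.const_mul b)
  rw [integral_add i2 (integrable_const _), integral_sub i1 (hUi.const_mul b),
    integral_sub hUV (hVi.const_mul a), integral_const_mul, integral_const_mul, integral_const]
  simp
  ring

lemma eVar_eq {U : Ω → ℝ} (hU : MemLp U 2 μ) :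
    eVar μ U = (∫ ω, U ω ^ 2 ∂μ) - (∫ ω, U ω ∂μ) ^ 2 := by
  have : eVar μ U = eCov μ U U := by
    unfold eVar eCov; exact integral_congr_ae (Filter.Eventually.of_forall fun ω => sq _)
  rw [this, eCov_eq hU hU]
  simp [sq]

lemma eCov_comm (U V : Ω → ℝ) : eCov μ U V = eCov μ V U := by
  unfold eCov; exact integral_congr_ae (Filter.Eventually.of_forall fun ω => mul_comm _ _)

lemma memℒp_sum {ι : Type*} [Fintype ι] (c : ι → ℝ) (V : ι → Ω → ℝ)
    (hV : ∀ j, MemLp (V j) 2 μ) : MemLp (fun ω => ∑ j, c j * V j ω) 2 μ :=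
  memLp_finset_sum _ fun j _ => (hV j).const_mul (c j)

lemma eCov_sum_left {ι : Type*} [Fintype ι] (c : ι → ℝ) (V : ι → Ω → ℝ)
    (hV : ∀ j, MemLp (V j) 2 μ) {W : Ω → ℝ} (hW : MemLp W 2 μ) :
    eCov μ (fun ω => ∑ j, c j * V j ω) W = ∑ j, c j * eCov μ (V j) W := by
  have hsum := memℒp_sum c V hV
  rw [eCov_eq hsum hW]
  have h1 : (∫ ω, (∑ j, c j * V j ω) * W ω ∂μ) = ∑ j, c j * ∫ ω, V j ω * W ω ∂μ := by
    rw [show (fun ω => (∑ j, c j * V j ω) * W ω)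
        = fun ω => ∑ j, c j * (V j ω * W ω) by funext ω; rw [Finset.sum_mul]; exact Finset.sum_congr rfl fun j _ => mul_assoc _ _ _]
    rw [integral_finset_sum _ fun j _ => (mem2_integrable_mul (hV j) hW).const_mul (c j)]
    exact Finset.sum_congr rfl fun j _ => integral_const_mul _ _
  have h2 : (∫ ω, (∑ j, c j * V j ω) ∂μ) = ∑ j, c j * ∫ ω, V j ω ∂μ := by
    rw [integral_finset_sum _ fun j _ => ((hV j).integrable one_le_two).const_mul (c j)]
    exact Finset.sum_congr rfl fun j _ => integral_const_mul _ _
  rw [h1, h2, Finset.sum_mul, ← Finset.sum_sub_distrib]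
  refine Finset.sum_congr rfl fun j _ => ?_
  rw [eCov_eq (hV j) hW]; ring

lemma sq_sub_expand {U V : Ω → ℝ} (hU : MemLp U 2 μ) (hV : MemLp V 2 μ) :
    ∫ ω, (U ω - V ω)^2 ∂μ
      = (∫ ω, U ω^2 ∂μ) - 2 * (∫ ω, U ω * V ω ∂μ) + ∫ ω, V ω^2 ∂μ := by
  rw [show (fun ω => (U ω - V ω)^2)
      = fun ω => (U ω^2 - 2 * (U ω * V ω)) + V ω^2 by funext ω; ring]
  have i1 : Integrable (fun ω => U ω ^ 2 - 2 * (U ω * V ω)) μ :=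
    hU.integrable_sq.sub ((mem2_integrable_mul hU hV).const_mul 2)
  rw [integral_add i1 hV.integrable_sq,
    integral_sub hU.integrable_sq ((mem2_integrable_mul hU hV).const_mul 2), integral_const_mul]

lemma snd_moment {U : Ω → ℝ} (hU : MemLp U 2 μ) :
    (∫ ω, U ω ^ 2 ∂μ) = eVar μ U + (∫ ω, U ω ∂μ) ^ 2 := by
  rw [eVar_eq hU]; ring

lemma int_mul_eq {U V : Ω → ℝ} (hU : MemLp U 2 μ) (hV : MemLp V 2 μ) :
    (∫ ω, U ω * V ω ∂μ) = eCov μ U V + (∫ ω, U ω ∂μ) * (∫ ω, V ω ∂μ) := by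
  rw [eCov_eq hU hV]; ring

end CVHelpers

/-- **Comparison of CV bias and expected optimism in the i.i.d. case.** In the fixed-design
linear-predictor setting of Theorem 2, if `Σ = σ_ε² I` and the test response is uncorrelated
with the training responses, then, since `H` has zero diagonal, `tr(H Σ) = σ_ε² tr(H) = 0`
and the CV bias vanishes: `w_cv = 0`. In contrast, for any deterministic matrix `H'` and any
i.i.d. copy `y*` of `y`, the expected optimism equals `(2 σ_ε²/n) tr(H')`. -/
theorem cv_bias_vs_expected_optimism_iid
    {Ω : Type*} [MeasurableSpace Ω] (μ : Measure Ω) [IsProbabilityMeasure μ]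
    (n : ℕ) (hn : 0 < n) (σε2 : ℝ) (hσ : 0 ≤ σε2)
    (y : Fin n → Ω → ℝ) (hy : ∀ k, MemLp (y k) 2 μ)
    (H : Matrix (Fin n) (Fin n) ℝ) (hHdiag : ∀ k, H k k = 0)
    (ytr : Fin (n - 1) → Ω → ℝ) (hytr : ∀ j, MemLp (ytr j) 2 μ)
    (yte : Ω → ℝ) (hyte : MemLp yte 2 μ)
    (hte : Fin (n - 1) → ℝ)
    (Sig : Matrix (Fin n) (Fin n) ℝ)
    (hSig : ∀ i j, Sig i j = eCov μ (y i) (y j))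
    (hiid : Sig = σε2 • (1 : Matrix (Fin n) (Fin n) ℝ))
    (hmean : ∀ k, ∫ ω, y k ω ∂μ = ∫ ω, yte ω ∂μ)
    (hvar : ∀ k, eVar μ (y k) = eVar μ yte)
    (hmeanH : ∀ k, ∫ ω, (∑ j, H k j * y j ω) ∂μ = ∫ ω, (∑ j, hte j * ytr j ω) ∂μ)
    (hvarH : ∀ k, eVar μ (fun ω => ∑ j, H k j * y j ω)
        = eVar μ (fun ω => ∑ j, hte j * ytr j ω))
    (hc : ∀ j, eCov μ (ytr j) yte = 0) :
    (Matrix.trace (H * Sig) = σε2 * Matrix.trace H) ∧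
    (Matrix.trace (H * Sig) = 0) ∧
    ((∫ ω, (yte ω - ∑ j, hte j * ytr j ω) ^ 2 ∂μ)
        - (1 / (n : ℝ)) * ∫ ω, ∑ k, (y k ω - ∑ j, H k j * y j ω) ^ 2 ∂μ = 0) ∧
    (∀ (H' : Matrix (Fin n) (Fin n) ℝ) (ystar : Fin n → Ω → ℝ),
      (∀ k, MemLp (ystar k) 2 μ) →
      Measurable (fun ω k => y k ω) →
      Measurable (fun ω k => ystar k ω) →
      IndepFun (fun ω k => y k ω) (fun ω k => ystar k ω) μ →
      μ.map (fun ω k => y k ω) = μ.map (fun ω k => ystar k ω) →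
      (∫ ω, (1 / (n : ℝ)) * ∑ k, (ystar k ω - ∑ j, H' k j * y j ω) ^ 2 ∂μ)
          - ∫ ω, (1 / (n : ℝ)) * ∑ k, (y k ω - ∑ j, H' k j * y j ω) ^ 2 ∂μ
        = (2 * σε2 / (n : ℝ)) * Matrix.trace H') := by
  have hn' : (n : ℝ) ≠ 0 := Nat.cast_ne_zero.mpr hn.ne'
  have htrH : Matrix.trace H = 0 := by
    simp [Matrix.trace, Matrix.diag, hHdiag]
  have htr : Matrix.trace (H * Sig) = σε2 * Matrix.trace H := by
    rw [hiid, Matrix.mul_smul, Matrix.mul_one, Matrix.trace_smul, smul_eq_mul]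
  have hcov : ∀ i j, eCov μ (y i) (y j) = if i = j then σε2 else 0 := by
    intro i j
    rw [← hSig i j, hiid]
    by_cases h : i = j <;> simp [Matrix.one_apply, h]
  have hS : MemLp (fun ω => ∑ j, hte j * ytr j ω) 2 μ := memℒp_sum hte ytr hytr
  refine ⟨htr, by rw [htr, htrH, mul_zero], ?_, ?_⟩
  · -- CV bias vanishes
    have hT : ∀ k, MemLp (fun ω => ∑ j, H k j * y j ω) 2 μ :=
      fun k => memℒp_sum (fun j => H k j) y hy
    have hk : ∀ k, (∫ ω, (y k ω - ∑ j, H k j * y j ω) ^ 2 ∂μ)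
        = ∫ ω, (yte ω - ∑ j, hte j * ytr j ω) ^ 2 ∂μ := by
      intro k
      rw [sq_sub_expand (hy k) (hT k), sq_sub_expand hyte hS]
      have e1 : (∫ ω, y k ω ^ 2 ∂μ) = ∫ ω, yte ω ^ 2 ∂μ := by
        rw [snd_moment (hy k), snd_moment hyte, hvar k, hmean k]
      have e2 : (∫ ω, (∑ j, H k j * y j ω) ^ 2 ∂μ)
          = ∫ ω, (∑ j, hte j * ytr j ω) ^ 2 ∂μ := by
        rw [snd_moment (hT k), snd_moment hS, hvarH k, hmeanH k]
      have c1 : eCov μ (y k) (fun ω => ∑ j, H k j * y j ω) = 0 := by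
        rw [eCov_comm, eCov_sum_left (fun j => H k j) y hy (hy k)]
        rw [Finset.sum_eq_single k (fun j _ hj => by simp [hcov, hj]) (by simp)]
        simp [hHdiag k]
      have c2 : eCov μ yte (fun ω => ∑ j, hte j * ytr j ω) = 0 := by
        rw [eCov_comm, eCov_sum_left hte ytr hytr hyte]
        simp [hc]
      have e3 : (∫ ω, y k ω * (∑ j, H k j * y j ω) ∂μ)
          = ∫ ω, yte ω * (∑ j, hte j * ytr j ω) ∂μ := by
        rw [int_mul_eq (hy k) (hT k), int_mul_eq hyte hS, c1, c2, hmean k, hmeanH k]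
      rw [e1, e2, e3]
    have hint : ∀ k ∈ Finset.univ, Integrable
        (fun ω => (y k ω - ∑ j, H k j * y j ω) ^ 2) μ :=
      fun k _ => ((hy k).sub (hT k)).integrable_sq
    rw [integral_finset_sum _ hint]
    simp_rw [hk]
    rw [Finset.sum_const, Finset.card_univ, Fintype.card_fin, nsmul_eq_mul]
    field_simp
    ring
  · -- expected optimism
    intro H' ystar hys hmY hmYs hind hmap
    have hT : ∀ k, MemLp (fun ω => ∑ j, H' k j * y j ω) 2 μ :=
      fun k => memℒp_sum (fun j => H' k j) y hy
    have hφ : ∀ k, Measurable (fun v : Fin n → ℝ => ∑ j, H' k j * v j) := by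
      intro k
      exact Finset.measurable_sum _ fun j _ => (measurable_pi_apply j).const_mul _
    have hk : ∀ k,
        (∫ ω, (ystar k ω - ∑ j, H' k j * y j ω) ^ 2 ∂μ)
          - (∫ ω, (y k ω - ∑ j, H' k j * y j ω) ^ 2 ∂μ) = 2 * σε2 * H' k k := by
      intro k
      rw [sq_sub_expand (hys k) (hT k), sq_sub_expand (hy k) (hT k)]
      have m2mb : Measurable (fun v : Fin n → ℝ => (v k) ^ 2) :=
        (measurable_pi_apply k).pow_const 2
      have mom2 : (∫ ω, ystar k ω ^ 2 ∂μ) = ∫ ω, y k ω ^ 2 ∂μ := by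
        calc (∫ ω, ystar k ω ^ 2 ∂μ)
            = ∫ v, (v k) ^ 2 ∂(μ.map (fun ω k => ystar k ω)) :=
              (integral_map hmYs.aemeasurable m2mb.aestronglyMeasurable).symm
          _ = ∫ v, (v k) ^ 2 ∂(μ.map (fun ω k => y k ω)) := by rw [hmap]
          _ = ∫ ω, y k ω ^ 2 ∂μ := integral_map hmY.aemeasurable m2mb.aestronglyMeasurable
      have mom1 : (∫ ω, ystar k ω ∂μ) = ∫ ω, y k ω ∂μ := by
        calc (∫ ω, ystar k ω ∂μ)
            = ∫ v, v k ∂(μ.map (fun ω k => ystar k ω)) :=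
              (integral_map hmYs.aemeasurable
                (measurable_pi_apply k).aestronglyMeasurable).symm
          _ = ∫ v, v k ∂(μ.map (fun ω k => y k ω)) := by rw [hmap]
          _ = ∫ ω, y k ω ∂μ := integral_map hmY.aemeasurable
              (measurable_pi_apply k).aestronglyMeasurable
      have hik : IndepFun (ystar k) (fun ω => ∑ j, H' k j * y j ω) μ :=
        (hind.comp (hφ k) (measurable_pi_apply k)).symm
      have cross1 : (∫ ω, ystar k ω * (∑ j, H' k j * y j ω) ∂μ)
          = (∫ ω, ystar k ω ∂μ) * ∫ ω, (∑ j, H' k j * y j ω) ∂μ :=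
        hik.integral_mul_eq_mul_integral (hys k).aestronglyMeasurable (hT k).aestronglyMeasurable
      have cross2 : (∫ ω, y k ω * (∑ j, H' k j * y j ω) ∂μ)
          = σε2 * H' k k + (∫ ω, y k ω ∂μ) * ∫ ω, (∑ j, H' k j * y j ω) ∂μ := by
        rw [int_mul_eq (hy k) (hT k)]
        congr 1
        rw [eCov_comm, eCov_sum_left (fun j => H' k j) y hy (hy k)]
        rw [Finset.sum_eq_single k (fun j _ hj => by simp [hcov, hj]) (by simp)]
        simp [hcov, mul_comm]
      rw [mom2, cross1, cross2, mom1]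
      ring
    have hint1 : ∀ k ∈ Finset.univ, Integrable
        (fun ω => (ystar k ω - ∑ j, H' k j * y j ω) ^ 2) μ :=
      fun k _ => ((hys k).sub (hT k)).integrable_sq
    have hint2 : ∀ k ∈ Finset.univ, Integrable
        (fun ω => (y k ω - ∑ j, H' k j * y j ω) ^ 2) μ :=
      fun k _ => ((hy k).sub (hT k)).integrable_sq
    rw [integral_const_mul, integral_const_mul, integral_finset_sum _ hint1,
      integral_finset_sum _ hint2, ← mul_sub, ← Finset.sum_sub_distrib]
    simp_rw [hk]
    rw [← Finset.mul_sum, Matrix.trace]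
    simp only [Matrix.diag]
    ring
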